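/- Let q be a prime power, let G ∈ F_q^{k×n} be a matrix of rank k with columns g_1,…,g_n, and let s_1, s_2 ≥ 1 with s_1 + s_2 = k. If every column of G belongs to F_1 ∪ F_2 (i.e., each column lies entirely in one of the two file subspaces), then s_1/E_1(G) + s_2/E_2(G) ≤ 1. -/

import Mathlib

open Finset

/-- The `r`-th harmonic number `H_r = ∑_{i=1}^r 1/i`, as a real number (`H_0 = 0`). -/
noncomputable def harm (r : ℕ) : ℝ := ∑ i ∈ Finset.range r, (1 : ℝ) / (i + 1)

/-- The span of the columns of `G` indexed by the subset `S ⊆ {1,…,n}`. -/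
noncomputable def colSpan (F : Type*) [Field F] {k n : ℕ}
    (G : Matrix (Fin k) (Fin n) F) (S : Finset (Fin n)) : Submodule F (Fin k → F) :=
  Submodule.span F ((fun j => fun i => G i j) '' (S : Set (Fin n)))

/-- `α_V(s)`: the number of `s`-element subsets `S ⊆ {1,…,n}` whose columns span a
subspace containing the target subspace `V`. -/
noncomputable def alphaCount (F : Type*) [Field F] {k n : ℕ}
    (G : Matrix (Fin k) (Fin n) F) (V : Submodule F (Fin k → F)) (s : ℕ) : ℕ :=
  Nat.card {S : Finset (Fin n) // S.card = s ∧ V ≤ colSpan F G S}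

/-- The first file subspace `F₁ = span(e_1, …, e_{s₁}) ⊆ F_q^k`. -/
noncomputable def file1 (F : Type*) [Field F] (k s1 : ℕ) : Submodule F (Fin k → F) :=
  Submodule.span F {v : Fin k → F | ∃ i : Fin k, (i : ℕ) < s1 ∧ v = Pi.single i 1}

/-- The second file subspace `F₂ = span(e_{s₁+1}, …, e_k) ⊆ F_q^k`. -/
noncomputable def file2 (F : Type*) [Field F] (k s1 : ℕ) : Submodule F (Fin k → F) :=
  Submodule.span F {v : Fin k → F | ∃ i : Fin k, s1 ≤ (i : ℕ) ∧ v = Pi.single i 1}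

/-- The expected retrieval time `E(G, V) = n·H_n − ∑_{s=1}^{n−1} α_V(s)/C(n−1,s)`. -/
noncomputable def Etime (F : Type*) [Field F] {k n : ℕ}
    (G : Matrix (Fin k) (Fin n) F) (V : Submodule F (Fin k → F)) : ℝ :=
  (n : ℝ) * harm n -
    ∑ s ∈ Finset.Icc 1 (n - 1), (alphaCount F G V s : ℝ) / ((n - 1).choose s : ℝ)

/-- The hyperbolic bound for pure-file codes: if every column of `G` lies entirely in
`F₁` or in `F₂`, then `s₁/E₁(G) + s₂/E₂(G) ≤ 1`. -/
lemma factSum (t u : ℕ) : ∀ m : ℕ,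
    (∑ r ∈ Finset.range (m+1), m.choose r * ((t+r).factorial * (m+u-r).factorial))
      * (t+1+u).factorial = (t+1+u+m).factorial * (t.factorial * u.factorial) := by
  intro m
  induction m with
  | zero => simp [Nat.factorial]; ring
  | succ m ih =>
    set A : ℕ → ℕ := fun r => m.choose r * ((t+r).factorial * (m+1+u-r).factorial) with hA
    set B : ℕ → ℕ := fun r => (m+1).choose r * ((t+r).factorial * (m+1+u-r).factorial) with hB
    have key : (∑ r ∈ Finset.range (m+2), B r)
        = (t+u+m+2) * ∑ r ∈ Finset.range (m+1), m.choose r * ((t+r).factorial * (m+u-r).factorial) := by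
      rw [Finset.sum_range_succ' B (m+1)]
      have h1 : ∀ r ∈ Finset.range (m+1),
          B (r+1) = m.choose r * ((t+r+1).factorial * (m+u-r).factorial) + A (r+1) := by
        intro r hr
        simp only [hA, hB]
        rw [Nat.choose_succ_succ]
        have e1 : t+(r+1) = t+r+1 := by omega
        have e2 : m+1+u-(r+1) = m+u-r := by omega
        rw [e1, e2, Nat.add_mul]
      rw [Finset.sum_congr rfl h1, Finset.sum_add_distrib]
      have hB0 : B 0 = A 0 := by simp [hA, hB]
      have h2 : (∑ r ∈ Finset.range (m+1), A (r+1)) + B 0 = ∑ r ∈ Finset.range (m+1), A r := by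
        rw [hB0, ← Finset.sum_range_succ' A (m+1), Finset.sum_range_succ A (m+1)]
        have : A (m+1) = 0 := by simp [hA, Nat.choose_eq_zero_of_lt]
        rw [this, add_zero]
      rw [add_assoc, h2, ← Finset.sum_add_distrib, Finset.mul_sum]
      refine Finset.sum_congr rfl ?_
      intro r hr
      simp only [hA]
      have hr' : r ≤ m := by simpa using Nat.lt_succ_iff.mp (Finset.mem_range.mp hr)
      have e3 : m+1+u-r = (m+u-r) + 1 := by omega
      rw [e3, Nat.factorial_succ (t+r), Nat.factorial_succ (m+u-r)]
      have e5 : (t+r+1) + (m+u-r+1) = t+u+m+2 := by omega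
      rw [← e5]
      ring
    calc (∑ r ∈ Finset.range (m+1+1), (m+1).choose r * ((t+r).factorial * (m+1+u-r).factorial)) * (t+1+u).factorial
        = ((t+u+m+2) * ∑ r ∈ Finset.range (m+1), m.choose r * ((t+r).factorial * (m+u-r).factorial)) * (t+1+u).factorial := by rw [← key]
      _ = (t+u+m+2) * ((t+1+u+m).factorial * (t.factorial * u.factorial)) := by rw [mul_assoc, ih]
      _ = (t+1+u+(m+1)).factorial * (t.factorial * u.factorial) := by
          have : t+1+u+(m+1) = (t+1+u+m)+1 := by omega
          rw [this, Nat.factorial_succ]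
          ring_nf

def dcount (nA m t s : ℕ) : ℕ := if t ≤ s then nA.choose t * m.choose (s - t) else 0

lemma tailSum (t u m : ℕ) :
    ∑ s ∈ Finset.range (t+1+u+m),
      (dcount (t+1+u) m t s : ℝ) / (((t+1+u+m) - s : ℕ) * ((t+1+u+m).choose s)) = 1 / (u+1) := by
  set nA := t+1+u with hnA
  set n := t+1+u+m with hn
  set f : ℕ → ℝ := fun s => (dcount nA m t s : ℝ) / ((n - s : ℕ) * (n.choose s)) with hf
  have step1 : ∑ s ∈ Finset.range n, f s = ∑ s ∈ Finset.Ico t n, f s := by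
    refine (Finset.sum_subset ?_ ?_).symm
    · intro s hs; simp only [Finset.mem_Ico] at hs; exact Finset.mem_range.mpr hs.2
    · intro s hs hs'
      simp only [Finset.mem_range] at hs
      simp only [Finset.mem_Ico, not_and, not_le] at hs'
      have : ¬ t ≤ s := by omega
      simp [hf, dcount, this]
  have step2 : ∑ s ∈ Finset.Ico t n, f s = ∑ r ∈ Finset.range (n - t), f (t + r) :=
    Finset.sum_Ico_eq_sum_range f t n
  have step3 : ∑ r ∈ Finset.range (n - t), f (t + r) = ∑ r ∈ Finset.range (m+1), f (t + r) := by
    refine (Finset.sum_subset ?_ ?_).symm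
    · intro r hr; simp only [Finset.mem_range] at hr ⊢; omega
    · intro r hr hr'
      simp only [Finset.mem_range, not_lt] at hr hr'
      have e : t + r - t = r := by omega
      have hz : m.choose r = 0 := Nat.choose_eq_zero_of_lt (by omega)
      simp [hf, dcount, e, hz]
  have hterm : ∀ r ∈ Finset.range (m+1),
      f (t + r) = ((nA.choose t * (m.choose r * ((t+r).factorial * (m+u-r).factorial)) : ℕ) : ℝ)
        / (n.factorial : ℝ) := by
    intro r hr
    simp only [Finset.mem_range] at hr
    have hrm : r ≤ m := by omega
    have e1 : t + r - t = r := by omega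
    have hsn : t + r ≤ n := by omega
    have e2 : n - (t+r) = (m+u-r) + 1 := by omega
    have hfact : (n - (t+r)) * (n.choose (t+r)) * ((t+r).factorial * (m+u-r).factorial)
        = n.factorial := by
      have h3 := Nat.choose_mul_factorial_mul_factorial hsn
      rw [e2] at h3 ⊢
      rw [Nat.factorial_succ] at h3
      -- h3 : n.choose (t+r) * (t+r)! * ((m+u-r+1) * (m+u-r)!) = n!
      rw [← h3]; ring
    have hd : dcount nA m t (t+r) = nA.choose t * m.choose r := by
      simp [dcount, e1]
    rw [hf]
    simp only [hd]
    rw [div_eq_div_iff]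
    · push_cast
      rw [← hfact]
      push_cast
      ring
    · have h1 : 0 < n - (t+r) := by omega
      have h2 : 0 < n.choose (t+r) := Nat.choose_pos hsn
      positivity
    · positivity
  rw [step1, step2, step3, Finset.sum_congr rfl hterm]
  rw [← Finset.sum_div, ← Nat.cast_sum, ← Finset.mul_sum]
  have hfs := factSum t u m
  have hnA_fact : (nA.choose t : ℝ) * (t.factorial * (u+1).factorial) = nA.factorial := by
    have h4 := Nat.choose_mul_factorial_mul_factorial (show t ≤ nA by omega)
    have e3 : nA - t = u + 1 := by omega
    rw [e3] at h4
    exact_mod_cast by rw [← h4]; push_cast; ring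
  have hnfac : (0:ℝ) < n.factorial := by exact_mod_cast Nat.factorial_pos n
  have hnAfac : (0:ℝ) < nA.factorial := by exact_mod_cast Nat.factorial_pos nA
  have hfsR : ((∑ r ∈ Finset.range (m+1), m.choose r * ((t+r).factorial * (m+u-r).factorial) : ℕ) : ℝ)
      * (nA.factorial : ℝ) = (n.factorial : ℝ) * (t.factorial * u.factorial) := by
    exact_mod_cast hfs
  rw [div_eq_div_iff (ne_of_gt hnfac) (by positivity : ((u:ℝ)+1) ≠ 0)]
  have expand : ((u:ℝ)+1) * (u.factorial) = ((u+1).factorial : ℝ) := by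
    rw [Nat.factorial_succ]; push_cast; ring
  -- goal: ↑(choose) * ↑Σ * (u+1) = 1 * n!
  have : (nA.choose t : ℝ) * (((∑ r ∈ Finset.range (m+1), m.choose r * ((t+r).factorial * (m+u-r).factorial) : ℕ)) : ℝ) * ((u:ℝ)+1) * (nA.factorial : ℝ)
      = (n.factorial : ℝ) * (nA.factorial : ℝ) := by
    calc (nA.choose t : ℝ) * (((∑ r ∈ Finset.range (m+1), m.choose r * ((t+r).factorial * (m+u-r).factorial) : ℕ)) : ℝ) * ((u:ℝ)+1) * (nA.factorial : ℝ)
        = (nA.choose t : ℝ) * ((((∑ r ∈ Finset.range (m+1), m.choose r * ((t+r).factorial * (m+u-r).factorial) : ℕ)) : ℝ) * (nA.factorial : ℝ)) * ((u:ℝ)+1) := by ring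
      _ = (nA.choose t : ℝ) * ((n.factorial : ℝ) * (t.factorial * u.factorial)) * ((u:ℝ)+1) := by rw [hfsR]
      _ = (n.factorial : ℝ) * ((nA.choose t : ℝ) * (t.factorial * (((u:ℝ)+1) * u.factorial))) := by ring
      _ = (n.factorial : ℝ) * ((nA.choose t : ℝ) * (t.factorial * ((u+1).factorial))) := by rw [expand]
      _ = (n.factorial : ℝ) * (nA.factorial : ℝ) := by rw [← hnA_fact]
  have h9 := mul_right_cancel₀ (ne_of_gt hnAfac) this
  push_cast at h9 ⊢
  linarith [h9]

lemma countInter {n : ℕ} (A : Finset (Fin n)) (s t : ℕ) :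
    ((Finset.univ : Finset (Finset (Fin n))).filter
      (fun S => S.card = s ∧ (S ∩ A).card = t)).card = dcount A.card (n - A.card) t s := by
  by_cases hts : t ≤ s
  · rw [dcount, if_pos hts]
    have hcompl : Aᶜ.card = n - A.card := by
      rw [Finset.card_compl, Fintype.card_fin]
    rw [← hcompl, ← Finset.card_powersetCard, ← Finset.card_powersetCard, ← Finset.card_product]
    refine Finset.card_nbij' (fun S => (S ∩ A, S \ A)) (fun p => p.1 ∪ p.2) ?_ ?_ ?_ ?_
    · intro S hS
      simp only [Finset.mem_coe, Finset.mem_filter, Finset.mem_univ, true_and] at hS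
      obtain ⟨hcard, hint⟩ := hS
      have hsd : (S ∩ A).card + (S \ A).card = S.card := Finset.card_inter_add_card_sdiff S A
      simp only [Finset.mem_coe, Finset.mem_product, Finset.mem_powersetCard]
      refine ⟨⟨Finset.inter_subset_right, hint⟩, ?_, ?_⟩
      · intro x hx
        simp only [Finset.mem_sdiff] at hx
        simp [hx.2]
      · omega
    · intro p hp
      simp only [Finset.mem_coe, Finset.mem_product, Finset.mem_powersetCard] at hp
      obtain ⟨⟨hp1, hc1⟩, hp2, hc2⟩ := hp
      have hdisj : Disjoint p.1 p.2 := by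
        refine Finset.disjoint_left.mpr ?_
        intro x hx1 hx2
        exact (Finset.mem_compl.mp (hp2 hx2)) (hp1 hx1)
      simp only [Finset.mem_coe, Finset.mem_filter, Finset.mem_univ, true_and]
      constructor
      · rw [Finset.card_union_of_disjoint hdisj, hc1, hc2]; omega
      · have : (p.1 ∪ p.2) ∩ A = p.1 := by
          rw [Finset.union_inter_distrib_right]
          have h1 : p.1 ∩ A = p.1 := Finset.inter_eq_left.mpr hp1
          have h2 : p.2 ∩ A = ∅ := by
            refine Finset.eq_empty_of_forall_notMem ?_
            intro x hx
            simp only [Finset.mem_inter] at hx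
            exact (Finset.mem_compl.mp (hp2 hx.1)) hx.2
          rw [h1, h2, Finset.union_empty]
        rw [this, hc1]
    · intro S hS
      simp only
      exact sup_inf_sdiff S A
    · intro p hp
      simp only [Finset.mem_coe, Finset.mem_product, Finset.mem_powersetCard] at hp
      obtain ⟨⟨hp1, hc1⟩, hp2, hc2⟩ := hp
      have h1 : (p.1 ∪ p.2) ∩ A = p.1 := by
        rw [Finset.union_inter_distrib_right, Finset.inter_eq_left.mpr hp1]
        have h2 : p.2 ∩ A = ∅ := by
          refine Finset.eq_empty_of_forall_notMem ?_
          intro x hx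
          simp only [Finset.mem_inter] at hx
          exact (Finset.mem_compl.mp (hp2 hx.1)) hx.2
        rw [h2, Finset.union_empty]
      have h3 : (p.1 ∪ p.2) \ A = p.2 := by
        rw [Finset.union_sdiff_distrib, Finset.sdiff_eq_empty_iff_subset.mpr hp1]
        have h4 : p.2 \ A = p.2 := by
          refine Finset.sdiff_eq_self_iff_disjoint.mpr ?_
          refine Finset.disjoint_left.mpr ?_
          intro x hx1 hx2
          exact (Finset.mem_compl.mp (hp2 hx1)) hx2
        rw [h4, Finset.empty_union]
      simp only [h1, h3]
  · rw [dcount, if_neg hts]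
    rw [Finset.card_eq_zero]
    refine Finset.filter_eq_empty_iff.mpr ?_
    intro S _
    rintro ⟨hcard, hint⟩
    have := Finset.card_le_card (Finset.inter_subset_left (s₁ := S) (s₂ := A))
    omega

lemma gammaSum {n : ℕ} (A : Finset (Fin n)) (si s : ℕ) :
    ((Finset.univ : Finset (Finset (Fin n))).filter
      (fun S => S.card = s ∧ (S ∩ A).card < si)).card
      = ∑ t ∈ Finset.range si, dcount A.card (n - A.card) t s := by
  classical
  rw [Finset.card_eq_sum_card_fiberwise
    (f := fun S : Finset (Fin n) => (S ∩ A).card) (t := Finset.range si) ?_]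
  · refine Finset.sum_congr rfl ?_
    intro t ht
    rw [← countInter A s t]
    congr 1
    rw [Finset.filter_filter]
    apply Finset.filter_congr
    intro S _
    simp only [Finset.mem_range] at ht
    constructor
    · rintro ⟨⟨h1, _⟩, h3⟩; exact ⟨h1, h3⟩
    · rintro ⟨h1, h3⟩
      subst h3
      exact ⟨⟨h1, ht⟩, rfl⟩
  · intro S hS
    simp only [Finset.mem_coe, Finset.mem_filter] at hS
    exact Finset.mem_range.mpr hS.2.2

section SpanAux
variable {F : Type*} [Field F] {k n s1 : ℕ}

lemma mem_file1_apply {x : Fin k → F} (hx : x ∈ file1 F k s1) :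
    ∀ i : Fin k, s1 ≤ (i : ℕ) → x i = 0 := by
  induction hx using Submodule.span_induction with
  | mem v hv =>
    obtain ⟨j, hj, rfl⟩ := hv
    intro i hi
    exact Pi.single_eq_of_ne (by rintro rfl; omega) 1
  | zero => intro i _; rfl
  | add x y _ _ hx hy => intro i hi; simp [Pi.add_apply, hx i hi, hy i hi]
  | smul c x _ hx => intro i hi; simp [Pi.smul_apply, hx i hi]

lemma mem_file2_apply {x : Fin k → F} (hx : x ∈ file2 F k s1) :
    ∀ i : Fin k, (i : ℕ) < s1 → x i = 0 := by
  induction hx using Submodule.span_induction with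
  | mem v hv =>
    obtain ⟨j, hj, rfl⟩ := hv
    intro i hi
    exact Pi.single_eq_of_ne (by rintro rfl; omega) 1
  | zero => intro i _; rfl
  | add x y _ _ hx hy => intro i hi; simp [Pi.add_apply, hx i hi, hy i hi]
  | smul c x _ hx => intro i hi; simp [Pi.smul_apply, hx i hi]

lemma file_inf_eq_bot : file1 F k s1 ⊓ file2 F k s1 = ⊥ := by
  refine (Submodule.eq_bot_iff _).mpr ?_
  rintro x ⟨hx1, hx2⟩
  funext i
  by_cases hi : (i : ℕ) < s1
  · exact mem_file2_apply hx2 i hi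
  · exact mem_file1_apply hx1 i (by omega)

lemma single_injective_one : Function.Injective (fun i : Fin k => (Pi.single i 1 : Fin k → F)) := by
  intro i j hij
  by_contra hne
  have hij' : (Pi.single i 1 : Fin k → F) = Pi.single j 1 := hij
  have h := congrFun hij' i
  rw [Pi.single_eq_same, Pi.single_eq_of_ne hne] at h
  exact one_ne_zero h

lemma finrank_file1 (hs : s1 ≤ k) : Module.finrank F (file1 F k s1) = s1 := by
  have hset : {v : Fin k → F | ∃ i : Fin k, (i : ℕ) < s1 ∧ v = Pi.single i 1}
      = Set.range (fun j : Fin s1 => (Pi.single (Fin.castLE hs j) 1 : Fin k → F)) := by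
    ext v
    constructor
    · rintro ⟨i, hi, rfl⟩
      exact ⟨⟨i, hi⟩, rfl⟩
    · rintro ⟨j, rfl⟩
      exact ⟨Fin.castLE hs j, by simpa using j.2, rfl⟩
  have hli : LinearIndependent F (fun j : Fin s1 => (Pi.single (Fin.castLE hs j) 1 : Fin k → F)) := by
    have h1 : (fun j : Fin s1 => (Pi.single (Fin.castLE hs j) 1 : Fin k → F))
        = (Pi.basisFun F (Fin k)) ∘ (Fin.castLE hs) := by
      funext j; simp [Pi.basisFun_apply]
    rw [h1]
    exact (Pi.basisFun F (Fin k)).linearIndependent.comp _ (Fin.castLE_injective hs)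
  rw [file1, hset, finrank_span_eq_card hli, Fintype.card_fin]

lemma finrank_file2 (hs : s1 ≤ k) : Module.finrank F (file2 F k s1) = k - s1 := by
  have hset : {v : Fin k → F | ∃ i : Fin k, s1 ≤ (i : ℕ) ∧ v = Pi.single i 1}
      = Set.range (fun j : Fin (k - s1) =>
          (Pi.single (⟨s1 + (j : ℕ), by omega⟩ : Fin k) 1 : Fin k → F)) := by
    ext v
    constructor
    · rintro ⟨i, hi, rfl⟩
      have he : (⟨s1 + ((i : ℕ) - s1), by omega⟩ : Fin k) = i := by
        apply Fin.ext
        simp only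
        omega
      exact ⟨⟨(i : ℕ) - s1, by omega⟩, congrArg (fun z : Fin k => (Pi.single z 1 : Fin k → F)) he⟩
    · rintro ⟨j, rfl⟩
      exact ⟨⟨s1 + (j : ℕ), by omega⟩, by simp, rfl⟩
  have hinj : Function.Injective (fun j : Fin (k - s1) => (⟨s1 + (j : ℕ), by omega⟩ : Fin k)) := by
    intro a b hab
    simp only [Fin.mk.injEq, add_right_inj] at hab
    exact Fin.val_injective hab
  have hli : LinearIndependent F (fun j : Fin (k - s1) =>
      (Pi.single (⟨s1 + (j : ℕ), by omega⟩ : Fin k) 1 : Fin k → F)) := by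
    have h1 : (fun j : Fin (k - s1) => (Pi.single (⟨s1 + (j : ℕ), by omega⟩ : Fin k) 1 : Fin k → F))
        = (Pi.basisFun F (Fin k)) ∘ (fun j : Fin (k - s1) => (⟨s1 + (j : ℕ), by omega⟩ : Fin k)) := by
      funext j; simp [Pi.basisFun_apply]
    rw [h1]
    exact (Pi.basisFun F (Fin k)).linearIndependent.comp _ hinj
  rw [file2, hset, finrank_span_eq_card hli, Fintype.card_fin]

lemma span_card_bound {n : ℕ} (G : Matrix (Fin k) (Fin n) F) (A : Finset (Fin n))
    (V W : Submodule F (Fin k → F))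
    (hA : ∀ j ∈ A, (fun i => G i j) ∈ V) (hA' : ∀ j ∉ A, (fun i => G i j) ∈ W)
    (hVW : V ⊓ W = ⊥) (S : Finset (Fin n)) (hS : V ≤ colSpan F G S) :
    Module.finrank F V ≤ (S ∩ A).card := by
  classical
  have h1 : colSpan F G S ≤ colSpan F G (S ∩ A) ⊔ W := by
    rw [colSpan, Submodule.span_le]
    rintro v ⟨j, hjS, rfl⟩
    by_cases hj : j ∈ A
    · exact Submodule.mem_sup_left (Submodule.subset_span ⟨j, by simp [hjS, hj], rfl⟩)
    · exact Submodule.mem_sup_right (hA' j hj)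
  have h3 : colSpan F G (S ∩ A) ≤ V := by
    rw [colSpan, Submodule.span_le]
    rintro v ⟨j, hj, rfl⟩
    simp only [Finset.coe_inter, Set.mem_inter_iff, Finset.mem_coe, Finset.mem_inter] at hj
    exact hA j hj.2
  have h2 : V ≤ colSpan F G (S ∩ A) ⊔ W := le_trans hS h1
  have hVX : V ≤ colSpan F G (S ∩ A) := by
    have h5 : V ≤ (colSpan F G (S ∩ A) ⊔ W) ⊓ V := le_inf h2 le_rfl
    rw [sup_inf_assoc_of_le W h3, inf_comm W V, hVW, sup_bot_eq] at h5
    exact h5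
  have h6 : Module.finrank F V ≤ Module.finrank F (colSpan F G (S ∩ A)) :=
    Submodule.finrank_mono hVX
  refine le_trans h6 ?_
  have h7 : colSpan F G (S ∩ A) =
      Submodule.span F (((S ∩ A).image (fun j => fun i => G i j) : Finset (Fin k → F)) : Set (Fin k → F)) := by
    rw [colSpan, Finset.coe_image]
  rw [h7]
  refine le_trans (finrank_span_finset_le_card _) ?_
  exact Finset.card_image_le

end SpanAux

open Matrix in
lemma colSpan_univ_eq_top {F : Type*} [Field F] {k n : ℕ}
    (G : Matrix (Fin k) (Fin n) F) (hrank : G.rank = k) :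
    colSpan F G Finset.univ = ⊤ := by
  have h1 : colSpan F G Finset.univ = Submodule.span F (Set.range G.col) := by
    rw [colSpan, Finset.coe_univ, Set.image_univ]
    rfl
  apply Submodule.eq_top_of_finrank_eq
  rw [h1, ← Matrix.rank_eq_finrank_span_cols, hrank, Module.finrank_fin_fun]

lemma Etime_bound {F : Type*} [Field F] {k n : ℕ} (G : Matrix (Fin k) (Fin n) F)
    (V : Submodule F (Fin k → F)) (A : Finset (Fin n)) (si : ℕ) (hsi : 1 ≤ si)
    (hsiA : si ≤ A.card)
    (hspan : ∀ S : Finset (Fin n), V ≤ colSpan F G S → si ≤ (S ∩ A).card) :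
    (n : ℝ) * si / A.card ≤ Etime F G V := by
  classical
  set nA := A.card with hnA
  have hnAn : nA ≤ n := by
    have := Finset.card_le_univ A
    simpa using this
  have hn1 : 1 ≤ n := le_trans (le_trans hsi hsiA) hnAn
  set βn : ℕ → ℕ := fun s => ((Finset.univ : Finset (Finset (Fin n))).filter
      (fun S => S.card = s ∧ si ≤ (S ∩ A).card)).card with hβ
  set γn : ℕ → ℕ := fun s => ((Finset.univ : Finset (Finset (Fin n))).filter
      (fun S => S.card = s ∧ (S ∩ A).card < si)).card with hγ
  -- α ≤ β
  have halpha : ∀ s, alphaCount F G V s ≤ βn s := by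
    intro s
    have h1 : alphaCount F G V s = ((Finset.univ : Finset (Finset (Fin n))).filter
        (fun S => S.card = s ∧ V ≤ colSpan F G S)).card := by
      rw [alphaCount, Nat.card_eq_fintype_card, Fintype.card_subtype]
    rw [h1, hβ]
    apply Finset.card_le_card
    intro S hS
    simp only [Finset.mem_filter, Finset.mem_univ, true_and] at hS ⊢
    exact ⟨hS.1, hspan S hS.2⟩
  -- β + γ = choose
  have hsplit : ∀ s, βn s + γn s = n.choose s := by
    intro s
    have h2 : (Finset.univ : Finset (Finset (Fin n))).filter (fun S => S.card = s)
        = Finset.powersetCard s Finset.univ := by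
      rw [Finset.powersetCard_eq_filter, Finset.powerset_univ]
    have h3 := Finset.card_filter_add_card_filter_not
      (s := (Finset.univ : Finset (Finset (Fin n))).filter (fun S => S.card = s))
      (p := fun S => si ≤ (S ∩ A).card)
    rw [Finset.filter_filter, Finset.filter_filter] at h3
    rw [hβ, hγ]
    simp only
    have e1 : ((Finset.univ : Finset (Finset (Fin n))).filter
        (fun S => S.card = s ∧ si ≤ (S ∩ A).card)).card
        + ((Finset.univ : Finset (Finset (Fin n))).filter
        (fun S => S.card = s ∧ ¬ si ≤ (S ∩ A).card)).card = n.choose s := by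
      rw [h3, h2, Finset.card_powersetCard, Finset.card_univ, Fintype.card_fin]
    have efil : ((Finset.univ : Finset (Finset (Fin n))).filter
        (fun S => S.card = s ∧ (S ∩ A).card < si))
        = ((Finset.univ : Finset (Finset (Fin n))).filter
        (fun S => S.card = s ∧ ¬ si ≤ (S ∩ A).card)) := by
      apply Finset.filter_congr
      intro S _
      simp [not_le]
    rw [efil]
    exact e1
  -- Etime lower bound via β sums
  have hEt : (n : ℝ) * harm n - ∑ s ∈ Finset.range n, (βn s : ℝ) / ((n - 1).choose s : ℝ)
      ≤ Etime F G V := by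
    rw [Etime]
    have hsub : Finset.Icc 1 (n - 1) ⊆ Finset.range n := by
      intro s hs
      simp only [Finset.mem_Icc] at hs
      exact Finset.mem_range.mpr (by omega)
    have hle1 : ∑ s ∈ Finset.Icc 1 (n-1), (alphaCount F G V s : ℝ) / ((n - 1).choose s : ℝ)
        ≤ ∑ s ∈ Finset.range n, (βn s : ℝ) / ((n - 1).choose s : ℝ) := by
      refine le_trans (Finset.sum_le_sum ?_) (Finset.sum_le_sum_of_subset_of_nonneg hsub ?_)
      · intro s hsmem
        simp only [Finset.mem_Icc] at hsmem
        have hc : (0:ℝ) < ((n-1).choose s : ℝ) := by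
          exact_mod_cast Nat.choose_pos (show s ≤ n - 1 by omega)
        exact (div_le_div_iff_of_pos_right hc).mpr (by exact_mod_cast halpha s)
      · intro s _ _
        positivity
    linarith
  -- rewrite harmonic sum
  have hharm : (n : ℝ) * harm n = ∑ s ∈ Finset.range n, (n : ℝ) / ((n - s : ℕ) : ℝ) := by
    rw [harm, Finset.mul_sum]
    rw [← Finset.sum_range_reflect (fun i => (n : ℝ) * (1 / ((i : ℝ) + 1))) n]
    refine Finset.sum_congr rfl ?_
    intro s hs
    simp only [Finset.mem_range] at hs
    have e : (n - 1 - s) + 1 = n - s := by omega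
    have e2 : ((n - 1 - s : ℕ) : ℝ) + 1 = ((n - s : ℕ) : ℝ) := by exact_mod_cast congrArg (Nat.cast : ℕ → ℝ) e
    rw [← e2]
    ring
  -- per-s identity
  have hper : ∀ s ∈ Finset.range n,
      (n : ℝ) / ((n - s : ℕ) : ℝ) - (βn s : ℝ) / ((n - 1).choose s : ℝ)
      = ∑ t ∈ Finset.range si, (dcount nA (n - nA) t s : ℝ)
          * ((n : ℝ) / (((n - s : ℕ) : ℝ) * (n.choose s : ℝ))) := by
    intro s hs
    simp only [Finset.mem_range] at hs
    have hd : 0 < n - s := by omega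
    have hC : 0 < n.choose s := Nat.choose_pos (by omega)
    have hc : 0 < (n-1).choose s := Nat.choose_pos (by omega)
    have hrel : (n-1).choose s * n = n.choose s * (n - s) := by
      have := Nat.choose_mul_succ_eq (n-1) s
      have e3 : n - 1 + 1 = n := by omega
      rw [e3] at this
      exact this
    have hγs : (γn s : ℝ) = ∑ t ∈ Finset.range si, (dcount nA (n - nA) t s : ℝ) := by
      rw [hγ]
      simp only
      rw [gammaSum A si s]
      push_cast
      rfl
    rw [← Finset.sum_mul, ← hγs]
    -- goal: n/(n-s) - β/c = γ * (n/((n-s)*C))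
    have hβγ : (βn s : ℝ) = (n.choose s : ℝ) - (γn s : ℝ) := by
      have := hsplit s
      have : ((βn s + γn s : ℕ) : ℝ) = (n.choose s : ℝ) := by rw [this]
      push_cast at this
      linarith
    rw [hβγ]
    have hdR : ((n - s : ℕ) : ℝ) > 0 := by exact_mod_cast hd
    have hCR : ((n.choose s : ℕ) : ℝ) > 0 := by exact_mod_cast hC
    have hcR : (((n-1).choose s : ℕ) : ℝ) > 0 := by exact_mod_cast hc
    have hrelR : (((n-1).choose s : ℕ) : ℝ) * n = (n.choose s : ℝ) * ((n - s : ℕ) : ℝ) := by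
      exact_mod_cast hrel
    have key1 : (n:ℝ) / ((n - s : ℕ) : ℝ) = (n.choose s : ℝ) / (((n-1).choose s : ℕ) : ℝ) := by
      rw [div_eq_div_iff (ne_of_gt hdR) (ne_of_gt hcR)]
      linarith [hrelR]
    have key2 : (n:ℝ) / (((n - s : ℕ) : ℝ) * (n.choose s : ℝ)) = 1 / (((n-1).choose s : ℕ) : ℝ) := by
      rw [div_eq_div_iff (by positivity) (ne_of_gt hcR)]
      linarith [hrelR]
    rw [key1, key2]
    field_simp
    ring
  -- tail sums
  have htail : ∀ t ∈ Finset.range si,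
      ∑ s ∈ Finset.range n, (dcount nA (n - nA) t s : ℝ)
        / (((n - s : ℕ) : ℝ) * (n.choose s : ℝ)) = 1 / ((nA - t : ℕ) : ℝ) := by
    intro t ht
    simp only [Finset.mem_range] at ht
    have htnA : t < nA := lt_of_lt_of_le ht hsiA
    have h := tailSum t (nA - 1 - t) (n - nA)
    have e5 : t + 1 + (nA - 1 - t) = nA := by omega
    rw [e5] at h
    have e6 : nA + (n - nA) = n := by omega
    rw [e6] at h
    have e7 : ((nA - 1 - t : ℕ) : ℝ) + 1 = ((nA - t : ℕ) : ℝ) := by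
      exact_mod_cast congrArg (Nat.cast : ℕ → ℝ) (show (nA - 1 - t) + 1 = nA - t by omega)
    rw [e7] at h
    exact h
  -- assemble
  have hassemble : ∑ t ∈ Finset.range si, (n : ℝ) / ((nA - t : ℕ) : ℝ)
      ≤ Etime F G V := by
    refine le_trans ?_ hEt
    rw [hharm, ← Finset.sum_sub_distrib, Finset.sum_congr rfl hper, Finset.sum_comm]
    refine le_of_eq ?_
    refine Finset.sum_congr rfl ?_
    intro t ht
    calc (n:ℝ) / ((nA - t : ℕ) : ℝ) = (n:ℝ) * (1 / ((nA - t : ℕ) : ℝ)) := by ring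
      _ = (n:ℝ) * ∑ s ∈ Finset.range n, (dcount nA (n - nA) t s : ℝ)
            / (((n - s : ℕ) : ℝ) * (n.choose s : ℝ)) := by rw [htail t ht]
      _ = ∑ s ∈ Finset.range n, (dcount nA (n - nA) t s : ℝ)
            * ((n : ℝ) / (((n - s : ℕ) : ℝ) * (n.choose s : ℝ))) := by
          rw [Finset.mul_sum]
          refine Finset.sum_congr rfl ?_
          intro s _
          ring
  refine le_trans ?_ hassemble
  have hnApos : (0:ℝ) < (nA:ℝ) := by exact_mod_cast lt_of_lt_of_le hsi hsiA
  have hstep : (n:ℝ) * si / nA = ∑ _t ∈ Finset.range si, (n:ℝ)/((nA:ℕ):ℝ) := by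
    rw [Finset.sum_const, Finset.card_range, nsmul_eq_mul]
    push_cast
    field_simp
  rw [hstep]
  refine Finset.sum_le_sum ?_
  intro t ht
  simp only [Finset.mem_range] at ht
  have htnA : t < nA := lt_of_lt_of_le ht hsiA
  have h1 : (0:ℝ) < ((nA - t : ℕ) : ℝ) := by exact_mod_cast Nat.sub_pos_of_lt htnA
  have h2 : ((nA - t : ℕ) : ℝ) ≤ ((nA : ℕ) : ℝ) := by exact_mod_cast Nat.sub_le nA t
  exact div_le_div_of_nonneg_left (by positivity) h1 h2

set_option maxHeartbeats 1000000 in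
theorem stmt10 (q k n s1 s2 : ℕ) (hq : IsPrimePow q)
    (F : Type*) [Field F] [Fintype F] (hF : Fintype.card F = q)
    (G : Matrix (Fin k) (Fin n) F) (hrank : G.rank = k)
    (hs1 : 1 ≤ s1) (hs2 : 1 ≤ s2) (hk : s1 + s2 = k)
    (hpure : ∀ j : Fin n, (fun i => G i j) ∈ file1 F k s1 ∨ (fun i => G i j) ∈ file2 F k s1) :
    (s1 : ℝ) / Etime F G (file1 F k s1) + (s2 : ℝ) / Etime F G (file2 F k s1) ≤ 1 := by
  classical
  set A : Finset (Fin n) := Finset.univ.filter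
    (fun j => (fun i => G i j) ∈ file1 F k s1 ∧ (fun i => G i j) ∉ file2 F k s1) with hAdef
  have hA : ∀ j ∈ A, (fun i => G i j) ∈ file1 F k s1 := by
    intro j hj
    simp only [hAdef, Finset.mem_filter] at hj
    exact hj.2.1
  have hA' : ∀ j ∉ A, (fun i => G i j) ∈ file2 F k s1 := by
    intro j hj
    by_cases h2 : (fun i => G i j) ∈ file2 F k s1
    · exact h2
    · rcases hpure j with h1 | h1
      · exact absurd (by simp [hAdef, h1, h2]) hj
      · exact h1
  have hAc : ∀ j ∈ Aᶜ, (fun i => G i j) ∈ file2 F k s1 := by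
    intro j hj
    exact hA' j (Finset.mem_compl.mp hj)
  have hAc' : ∀ j ∉ Aᶜ, (fun i => G i j) ∈ file1 F k s1 := by
    intro j hj
    exact hA j (by simpa using hj)
  have hs1k : s1 ≤ k := by omega
  have hinf1 : file1 F k s1 ⊓ file2 F k s1 = ⊥ := file_inf_eq_bot
  have hinf2 : file2 F k s1 ⊓ file1 F k s1 = ⊥ := by rw [inf_comm]; exact hinf1
  have hfr1 : Module.finrank F (file1 F k s1) = s1 := finrank_file1 hs1k
  have hfr2 : Module.finrank F (file2 F k s1) = s2 := by
    rw [finrank_file2 hs1k]; omega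
  have htop := colSpan_univ_eq_top G hrank
  have hspan1 : ∀ S : Finset (Fin n), file1 F k s1 ≤ colSpan F G S → s1 ≤ (S ∩ A).card := by
    intro S hS
    have := span_card_bound G A (file1 F k s1) (file2 F k s1) hA hA' hinf1 S hS
    rwa [hfr1] at this
  have hspan2 : ∀ S : Finset (Fin n), file2 F k s1 ≤ colSpan F G S → s2 ≤ (S ∩ Aᶜ).card := by
    intro S hS
    have := span_card_bound G Aᶜ (file2 F k s1) (file1 F k s1) hAc hAc' hinf2 S hS
    rwa [hfr2] at this
  have hcard1 : s1 ≤ A.card := by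
    have := hspan1 Finset.univ (by rw [htop]; exact le_top)
    rwa [Finset.univ_inter] at this
  have hcard2 : s2 ≤ Aᶜ.card := by
    have := hspan2 Finset.univ (by rw [htop]; exact le_top)
    rwa [Finset.univ_inter] at this
  have hE1 := Etime_bound G (file1 F k s1) A s1 hs1 hcard1 hspan1
  have hE2 := Etime_bound G (file2 F k s1) Aᶜ s2 hs2 hcard2 hspan2
  have hncards : A.card + Aᶜ.card = n := by
    rw [Finset.card_add_card_compl, Fintype.card_fin]
  have hn1 : 0 < n := by omega
  have hnR : (0:ℝ) < n := by exact_mod_cast hn1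
  have hA1R : (0:ℝ) < A.card := by exact_mod_cast lt_of_lt_of_le hs1 hcard1
  have hA2R : (0:ℝ) < Aᶜ.card := by exact_mod_cast lt_of_lt_of_le hs2 hcard2
  have hs1R : (0:ℝ) < s1 := by exact_mod_cast hs1
  have hs2R : (0:ℝ) < s2 := by exact_mod_cast hs2
  have hb1 : (0:ℝ) < (n:ℝ) * s1 / A.card := by positivity
  have hb2 : (0:ℝ) < (n:ℝ) * s2 / Aᶜ.card := by positivity
  have hE1pos : (0:ℝ) < Etime F G (file1 F k s1) := lt_of_lt_of_le hb1 hE1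
  have hE2pos : (0:ℝ) < Etime F G (file2 F k s1) := lt_of_lt_of_le hb2 hE2
  have hq1 : (s1 : ℝ) / Etime F G (file1 F k s1) ≤ (A.card : ℝ) / n := by
    have h3 : (s1:ℝ) / Etime F G (file1 F k s1) ≤ (s1:ℝ) / ((n:ℝ) * s1 / A.card) :=
      div_le_div_of_nonneg_left (le_of_lt hs1R) hb1 hE1
    refine le_trans h3 (le_of_eq ?_)
    field_simp
  have hq2 : (s2 : ℝ) / Etime F G (file2 F k s1) ≤ (Aᶜ.card : ℝ) / n := by
    have h3 : (s2:ℝ) / Etime F G (file2 F k s1) ≤ (s2:ℝ) / ((n:ℝ) * s2 / Aᶜ.card) :=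
      div_le_div_of_nonneg_left (le_of_lt hs2R) hb2 hE2
    refine le_trans h3 (le_of_eq ?_)
    field_simp
  have hsum : (A.card : ℝ) / n + (Aᶜ.card : ℝ) / n = 1 := by
    rw [← add_div]
    rw [show ((A.card : ℝ) + (Aᶜ.card : ℝ)) = ((A.card + Aᶜ.card : ℕ) : ℝ) by push_cast; ring]
    rw [hncards]
    field_simp
  linarith [hq1, hq2]
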